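/- For every m ≥ 1 there exists a constant C : ℕ such that for every L : ℕ, every nonempty finite set P of points of ℤ^m all of whose coordinates lie in [0, L], and every p0 ∈ P, there exists a finite set S of configurations in (Fin m → ℤ) × (Fin m → ℤ) with cardinality at most C·(L+1)^(3·m^2) such that every minimum-length solution trajectory for (P, p0) (a solution trajectory such that no solution trajectory for (P, p0) has strictly fewer configurations) has all of its configurations c t in S. In particular, an optimal trajectory can always be found inside a portion of the configuration space of size polynomial in L. -/

import Mathlib

/-- A trajectory of `k` configurations in the racetrack model on `ℤ^m`. -/
def IsTrajectory (m k : ℕ) (c : Fin k → (Fin m → ℤ) × (Fin m → ℤ)) : Prop :=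
  ∀ (t : ℕ) (h : t + 1 < k),
    (c ⟨t + 1, h⟩).1 = (c ⟨t, by omega⟩).1 + (c ⟨t + 1, h⟩).2 ∧
    ∀ j : Fin m, |(c ⟨t + 1, h⟩).2 j - (c ⟨t, by omega⟩).2 j| ≤ 1

/-- A solution trajectory for `(P, p0)`: a trajectory of `k ≥ 1` configurations
starting and ending at `p0` with zero velocity, visiting every point of `P`. -/
def IsSolution (m : ℕ) (P : Finset (Fin m → ℤ)) (p0 : Fin m → ℤ)
    (k : ℕ) (c : Fin k → (Fin m → ℤ) × (Fin m → ℤ)) : Prop :=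
  IsTrajectory m k c ∧ 1 ≤ k ∧
  (∀ h : 0 < k,
    (c ⟨0, h⟩).1 = p0 ∧ (c ⟨0, h⟩).2 = 0 ∧
    (c ⟨k - 1, Nat.sub_lt h one_pos⟩).1 = p0 ∧
    (c ⟨k - 1, Nat.sub_lt h one_pos⟩).2 = 0) ∧
  (∀ q ∈ P, ∃ t : Fin k, (c t).1 = q)

namespace VTSPAux
variable {m : ℕ}

def F (V : List (Fin m → ℤ)) : ℕ → (Fin m → ℤ)
  | 0 => 0
  | t + 1 => V.getD t 0

def pos (V : List (Fin m → ℤ)) (p : Fin m → ℤ) : ℕ → (Fin m → ℤ)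
  | 0 => p
  | t + 1 => pos V p t + F V (t + 1)

def Ok (V : List (Fin m → ℤ)) : Prop := ∀ (t : ℕ) (j : Fin m), |F V (t + 1) j - F V t j| ≤ 1

def glue (A B : List (Fin m → ℤ)) : List (Fin m → ℤ) := A ++ 0 :: B

lemma length_glue (A B : List (Fin m → ℤ)) : (glue A B).length = A.length + B.length + 1 := by
  simp [glue]; omega

lemma F_len_succ (A : List (Fin m → ℤ)) : F A (A.length + 1) = 0 := by
  simp [F, List.getD_eq_default]

lemma pos_len_succ (A : List (Fin m → ℤ)) (p : Fin m → ℤ) :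
    pos A p (A.length + 1) = pos A p A.length := by
  simp [pos, F_len_succ]

lemma getD_append_lt (A B : List (Fin m → ℤ)) (s : ℕ) (hs : s < A.length) :
    (A ++ B).getD s 0 = A.getD s 0 := by
  simp [List.getD, List.getElem?_append, hs]

lemma getD_append_ge (A B : List (Fin m → ℤ)) (s : ℕ) (hs : A.length ≤ s) :
    (A ++ B).getD s 0 = B.getD (s - A.length) 0 := by
  simp [List.getD, List.getElem?_append, Nat.not_lt.mpr hs]

lemma F_glue_left (A B : List (Fin m → ℤ)) {t : ℕ} (h : t ≤ A.length + 1) :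
    F (glue A B) t = F A t := by
  cases t with
  | zero => rfl
  | succ s =>
    rcases lt_or_ge s A.length with hs | hs
    · simp only [F, glue]
      exact getD_append_lt _ _ _ hs
    · have hs' : s = A.length := by omega
      subst hs'
      simp only [F, glue]
      rw [getD_append_ge _ _ _ (le_refl _), List.getD_eq_default _ _ (le_refl _)]
      simp

lemma F_glue_right (A B : List (Fin m → ℤ)) (s : ℕ) :
    F (glue A B) (A.length + 1 + s) = F B s := by
  cases s with
  | zero =>
    show (A ++ 0 :: B).getD A.length 0 = 0
    rw [getD_append_ge _ _ _ (le_refl _)]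
    simp
  | succ s =>
    show (A ++ 0 :: B).getD (A.length + 1 + s) 0 = B.getD s 0
    rw [getD_append_ge _ _ _ (by omega)]
    have h1 : A.length + 1 + s - A.length = s + 1 := by omega
    rw [h1]
    simp

lemma pos_glue_left (A B : List (Fin m → ℤ)) (p : Fin m → ℤ) {t : ℕ} (h : t ≤ A.length + 1) :
    pos (glue A B) p t = pos A p t := by
  induction t with
  | zero => rfl
  | succ s ih =>
    simp only [pos, ih (by omega), F_glue_left A B h]

lemma pos_glue_right (A B : List (Fin m → ℤ)) (p : Fin m → ℤ) (s : ℕ) :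
    pos (glue A B) p (A.length + 1 + s) = pos B (pos A p A.length) s := by
  induction s with
  | zero =>
    rw [Nat.add_zero, pos_glue_left A B p (le_refl _), pos_len_succ]
    rfl
  | succ s ih =>
    show pos (glue A B) p (A.length + 1 + s) + F (glue A B) (A.length + 1 + (s + 1)) =
      pos B (pos A p A.length) s + F B (s + 1)
    rw [ih, F_glue_right A B (s+1)]

lemma Ok_glue {A B : List (Fin m → ℤ)} (hA : Ok A) (hB : Ok B) : Ok (glue A B) := by
  intro t j
  rcases le_or_gt (t + 1) (A.length + 1) with h | h
  · rw [F_glue_left A B h, F_glue_left A B (by omega)]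
    exact hA t j
  · obtain ⟨s, rfl⟩ : ∃ s, t = A.length + 1 + s := ⟨t - (A.length + 1), by omega⟩
    have h1 : A.length + 1 + s + 1 = A.length + 1 + (s + 1) := by omega
    rw [h1, F_glue_right, F_glue_right]
    exact hB s j

lemma Ok_single (w : Fin m → ℤ) (h : ∀ j, |w j| ≤ 1) : Ok [w] := by
  intro t j
  match t with
  | 0 => simpa [F] using h j
  | 1 => simpa [F, abs_sub_comm] using h j
  | (s+2) => simp [F]

/-! ### Basic moves -/

def move (n : ℕ) (d : Fin m → ℤ) : List (Fin m → ℤ) :=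
  List.ofFn (fun i : Fin n => fun j => if (i : ℤ) < |d j| then (d j).sign else 0)

lemma length_move (n : ℕ) (d : Fin m → ℤ) : (move n d).length = n := by
  simp [move]

lemma F_move (n : ℕ) (d : Fin m → ℤ) (h : ∀ j, |d j| ≤ n) (t : ℕ) (j : Fin m) :
    F (move n d) (t + 1) j = if (t : ℤ) < |d j| then (d j).sign else 0 := by
  rcases lt_or_ge t n with ht | ht
  · show (move n d).getD t 0 j = _
    rw [List.getD_eq_getElem _ _ (by simpa [length_move] using ht)]
    erw [List.getElem_ofFn]
  · have h1 : ¬ ((t : ℤ) < |d j|) := by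
      push_neg
      calc |d j| ≤ (n : ℤ) := h j
        _ ≤ (t : ℤ) := by exact_mod_cast ht
    show (move n d).getD t 0 j = _
    rw [List.getD_eq_default _ _ (by simpa [length_move] using ht)]
    simp [h1]

lemma sign_abs_le (a : ℤ) : |a.sign| ≤ 1 := by
  cases a with
  | ofNat n => cases n <;> simp [Int.sign]
  | negSucc n => simp [Int.sign]

lemma F_move_cases (n : ℕ) (d : Fin m → ℤ) (h : ∀ j, |d j| ≤ n) (t : ℕ) (j : Fin m) :
    F (move n d) t j = 0 ∨ F (move n d) t j = (d j).sign := by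
  cases t with
  | zero => left; rfl
  | succ s =>
    rw [F_move n d h s j]
    split <;> simp

lemma Ok_move (n : ℕ) (d : Fin m → ℤ) (h : ∀ j, |d j| ≤ n) : Ok (move n d) := by
  intro t j
  have h1 := F_move_cases n d h (t + 1) j
  have h2 := F_move_cases n d h t j
  have h3 := sign_abs_le (d j)
  rcases h1 with h1 | h1 <;> rcases h2 with h2 | h2 <;> rw [h1, h2] <;>
    [skip; rw [abs_sub_comm]; skip; skip] <;> simpa using h3

lemma pos_move (n : ℕ) (d : Fin m → ℤ) (h : ∀ j, |d j| ≤ n) (p : Fin m → ℤ) (t : ℕ)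
    (j : Fin m) : pos (move n d) p t j = p j + min (t : ℤ) |d j| * (d j).sign := by
  induction t with
  | zero => simp [pos]
  | succ s ih =>
    show (pos (move n d) p s + F (move n d) (s + 1)) j = _
    rw [Pi.add_apply, ih, F_move n d h s j]
    rcases lt_or_ge (s : ℤ) |d j| with hs | hs
    · have e1 : min (s : ℤ) |d j| = s := min_eq_left (by omega)
      have e2 : min ((s : ℤ) + 1) |d j| = s + 1 := min_eq_left (by omega)
      rw [if_pos hs, e1]
      push_cast
      rw [e2]
      ring
    · have e1 : min (s : ℤ) |d j| = |d j| := min_eq_right hs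
      have e2 : min ((s : ℤ) + 1) |d j| = |d j| := min_eq_right (by omega)
      rw [if_neg (not_lt.mpr hs), e1]
      push_cast
      rw [e2]
      ring

lemma pos_move_end (n : ℕ) (d : Fin m → ℤ) (h : ∀ j, |d j| ≤ n) (p : Fin m → ℤ) :
    pos (move n d) p n = p + d := by
  funext j
  rw [pos_move n d h p n j, min_eq_right (h j), Pi.add_apply, mul_comm, Int.sign_mul_abs]


/-! ### Offsets and the snake tour -/

def off (j : ℕ) (x : ℤ) : Fin m → ℤ := fun i => if (i : ℕ) = j then x else 0

lemma off_abs_le (j : ℕ) (x : ℤ) (n : ℕ) (hx : |x| ≤ n) (i : Fin m) : |off j x i| ≤ n := by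
  unfold off
  split
  · exact hx
  · simp

lemma off_add (j : ℕ) (x y : ℤ) : off (m := m) j x + off j y = off j (x + y) := by
  funext i
  simp only [Pi.add_apply, off]
  split <;> simp

lemma off_zero (j : ℕ) : off (m := m) j 0 = 0 := by
  funext i; simp [off]

def rows (S : List (Fin m → ℤ)) (j : ℕ) : ℕ → List (Fin m → ℤ)
  | 0 => S
  | x + 1 => glue (rows S j x) (glue [off j 1] S)

def snake (L : ℕ) : ℕ → List (Fin m → ℤ)
  | 0 => []
  | j + 1 => glue (rows (snake L j) j L) (move L (off j (-(L : ℤ))))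

lemma Ok_nil : Ok ([] : List (Fin m → ℤ)) := by
  intro t j
  cases t <;> simp [F]

lemma Ok_rows {S : List (Fin m → ℤ)} (hS : Ok S) (j : ℕ) (x : ℕ) : Ok (rows S j x) := by
  induction x with
  | zero => exact hS
  | succ x ih =>
    exact Ok_glue ih (Ok_glue (Ok_single _ (off_abs_le j 1 1 (by simp))) hS)

lemma Ok_snake (L : ℕ) (j : ℕ) : Ok (snake (m := m) L j) := by
  induction j with
  | zero => exact Ok_nil
  | succ j ih =>
    exact Ok_glue (Ok_rows ih j L)
      (Ok_move L _ (off_abs_le j _ L (by simp)))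

lemma pos_glue_end (A B : List (Fin m → ℤ)) (p : Fin m → ℤ) :
    pos (glue A B) p (glue A B).length = pos B (pos A p A.length) B.length := by
  rw [length_glue, show A.length + B.length + 1 = A.length + 1 + B.length from by omega,
    pos_glue_right]

lemma length_rows (S : List (Fin m → ℤ)) (j x : ℕ) :
    (rows S j x).length = S.length + x * (S.length + 3) := by
  induction x with
  | zero => simp [rows]
  | succ x ih =>
    simp only [rows, length_glue, ih]
    simp
    ring

lemma length_snake (L j : ℕ) :
    (snake (m := m) L (j + 1)).length = (L + 1) * (snake (m := m) L j).length + 4 * L + 1 := by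
  simp only [snake, length_glue, length_rows, length_move]
  ring

lemma rows_end {S : List (Fin m → ℤ)} (hend : ∀ p, pos S p S.length = p) (j : ℕ) (x : ℕ)
    (p : Fin m → ℤ) : pos (rows S j x) p (rows S j x).length = p + off j (x : ℤ) := by
  induction x with
  | zero => simp [rows, hend, off_zero]
  | succ x ih =>
    rw [show rows S j (x + 1) = glue (rows S j x) (glue [off j 1] S) from rfl]
    rw [pos_glue_end, ih, pos_glue_end]
    have h1 : pos [off j 1] (p + off j (x : ℤ)) 1 = p + off j (x : ℤ) + off j 1 := by
      show p + off j (x : ℤ) + F [off j 1] 1 = _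
      rfl
    simp only [List.length_singleton, h1, hend]
    rw [add_assoc, off_add]
    push_cast
    ring_nf

lemma snake_end (L j : ℕ) (p : Fin m → ℤ) :
    pos (snake L j) p (snake (m := m) L j).length = p := by
  induction j generalizing p with
  | zero => rfl
  | succ j ih =>
    rw [show snake L (j + 1) = glue (rows (snake L j) j L) (move L (off j (-(L : ℤ)))) from rfl]
    rw [pos_glue_end, rows_end ih j L p, length_move,
      pos_move_end L _ (off_abs_le j _ L (by simp)), add_assoc, off_add]
    simp [off_zero]


/-! ### Visiting all points of the box -/

lemma rows_visit {S : List (Fin m → ℤ)} (hend : ∀ p, pos S p S.length = p) (j : ℕ) (x y : ℕ)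
    (hy : y ≤ x) (p : Fin m → ℤ) (t : ℕ) (ht : t ≤ S.length) :
    ∃ s ≤ (rows S j x).length, pos (rows S j x) p s = pos S (p + off j (y : ℤ)) t := by
  induction x with
  | zero =>
    have : y = 0 := by omega
    subst this
    exact ⟨t, ht, by norm_num [off_zero, rows]⟩
  | succ x ih =>
    rcases Nat.lt_or_ge y (x + 1) with hy' | hy'
    · obtain ⟨s, hs, hp⟩ := ih (by omega)
      refine ⟨s, ?_, ?_⟩
      · rw [show rows S j (x + 1) = glue (rows S j x) (glue [off j 1] S) from rfl, length_glue]
        omega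
      · rw [show rows S j (x + 1) = glue (rows S j x) (glue [off j 1] S) from rfl,
          pos_glue_left _ _ _ (by omega), hp]
    · have hyx : y = x + 1 := by omega
      subst hyx
      refine ⟨(rows S j x).length + 1 + (([off j 1] : List (Fin m → ℤ)).length + 1 + t), ?_, ?_⟩
      · rw [show rows S j (x + 1) = glue (rows S j x) (glue [off j 1] S) from rfl, length_glue,
          length_glue]
        simp only [List.length_singleton]
        omega
      · rw [show rows S j (x + 1) = glue (rows S j x) (glue [off j 1] S) from rfl,
          pos_glue_right, pos_glue_right]
        have h1 : pos [off j 1] (pos (rows S j x) p (rows S j x).length)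
            ([off j 1] : List (Fin m → ℤ)).length = p + off j ((x : ℤ) + 1) := by
          show pos (rows S j x) p (rows S j x).length + F [off j 1] 1 = _
          rw [rows_end hend]
          show p + off j (x : ℤ) + off j 1 = _
          rw [add_assoc, off_add]
        rw [h1]
        push_cast
        ring_nf

lemma snake_visit (L : ℕ) (j : ℕ) (p q : Fin m → ℤ)
    (h1 : ∀ i : Fin m, (i : ℕ) < j → p i ≤ q i ∧ q i ≤ p i + L)
    (h2 : ∀ i : Fin m, j ≤ (i : ℕ) → q i = p i) :
    ∃ t ≤ (snake (m := m) L j).length, pos (snake L j) p t = q := by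
  induction j generalizing p with
  | zero =>
    refine ⟨0, by omega, ?_⟩
    funext i
    exact (h2 i (by omega)).symm
  | succ j ih =>
    have key : ∃ x : ℕ, x ≤ L ∧
        (∀ i : Fin m, (i : ℕ) < j → (p + off (m := m) j (x : ℤ)) i ≤ q i ∧
          q i ≤ (p + off (m := m) j (x : ℤ)) i + L) ∧
        (∀ i : Fin m, j ≤ (i : ℕ) → q i = (p + off (m := m) j (x : ℤ)) i) := by
      by_cases hj : j < m
      · have hx0 := h1 ⟨j, hj⟩ (Nat.lt_succ_self j)
        refine ⟨(q ⟨j, hj⟩ - p ⟨j, hj⟩).toNat, by omega, ?_, ?_⟩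
        · intro i hi
          have hne : (i : ℕ) ≠ j := by omega
          simp only [Pi.add_apply, off, if_neg hne, add_zero]
          exact h1 i (by omega)
        · intro i hi
          rcases eq_or_lt_of_le hi with hij | hij
          · have hii : i = ⟨j, hj⟩ := by
              apply Fin.ext
              exact hij.symm
            subst hii
            have hcond : ((⟨j, hj⟩ : Fin m) : ℕ) = j := rfl
            simp only [Pi.add_apply, off, hcond, eq_self_iff_true, if_true]
            omega
          · have hne : (i : ℕ) ≠ j := by omega
            simp only [Pi.add_apply, off, if_neg hne, add_zero]
            exact h2 i (by omega)
      · refine ⟨0, by omega, ?_, ?_⟩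
        · intro i hi
          norm_num [off_zero]
          exact h1 i (by omega)
        · intro i hi
          exact absurd i.isLt (by omega)
    obtain ⟨x, hxL, hb1, hb2⟩ := key
    obtain ⟨t, ht, hpt⟩ := ih (p + off j (x : ℤ)) hb1 hb2
    obtain ⟨s, hs, hps⟩ := rows_visit (snake_end L j) j L x hxL p t ht
    refine ⟨s, ?_, ?_⟩
    · rw [show snake L (j + 1) =
        glue (rows (snake L j) j L) (move L (off j (-(L : ℤ)))) from rfl, length_glue]
      omega
    · rw [show snake L (j + 1) =
        glue (rows (snake L j) j L) (move L (off j (-(L : ℤ)))) from rfl,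
        pos_glue_left _ _ _ (by omega), hps, hpt]


lemma snake_length_le (L j : ℕ) : (snake (m := m) L j).length ≤ 4 * j * (L + 1) ^ j := by
  induction j with
  | zero => simp [snake]
  | succ j ih =>
    rw [length_snake]
    have h1 : (L + 1) ≤ (L + 1) ^ (j + 1) := Nat.le_self_pow (by omega) _
    have h2 : (L + 1) * (snake (m := m) L j).length ≤ 4 * j * (L + 1) ^ (j + 1) := by
      calc (L + 1) * (snake (m := m) L j).length ≤ (L + 1) * (4 * j * (L + 1) ^ j) :=
            Nat.mul_le_mul_left _ ih
        _ = 4 * j * (L + 1) ^ (j + 1) := by ring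
    have h3 : 4 * L + 1 ≤ 4 * (L + 1) ^ (j + 1) := by
      calc 4 * L + 1 ≤ 4 * (L + 1) := by omega
        _ ≤ 4 * (L + 1) ^ (j + 1) := Nat.mul_le_mul_left _ h1
    calc (L + 1) * (snake (m := m) L j).length + 4 * L + 1
        ≤ 4 * j * (L + 1) ^ (j + 1) + 4 * (L + 1) ^ (j + 1) := by omega
      _ = 4 * (j + 1) * (L + 1) ^ (j + 1) := by ring

end VTSPAux

namespace VTSPAux

lemma exists_short_solution (m : ℕ) (hm : 1 ≤ m) (L : ℕ) (P : Finset (Fin m → ℤ))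
    (hbox : ∀ q ∈ P, ∀ j : Fin m, 0 ≤ q j ∧ q j ≤ (L : ℤ))
    (p0 : Fin m → ℤ) (hp0 : p0 ∈ P) :
    ∃ (k : ℕ) (c : Fin k → (Fin m → ℤ) × (Fin m → ℤ)),
      IsSolution m P p0 k c ∧ k ≤ (4 * m + 4) * (L + 1) ^ m := by
  have hp0abs : ∀ j : Fin m, |p0 j| ≤ (L : ℤ) := by
    intro j
    have := hbox p0 hp0 j
    rw [abs_le]
    constructor <;> omega
  have hnegabs : ∀ j : Fin m, |(-p0) j| ≤ (L : ℤ) := by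
    intro j
    simpa [abs_neg] using hp0abs j
  set A : List (Fin m → ℤ) := move L (-p0) with hA
  set Mv : List (Fin m → ℤ) := move L p0 with hMv
  set S : List (Fin m → ℤ) := snake (m := m) L m with hS
  set B : List (Fin m → ℤ) := glue S Mv with hB
  set W : List (Fin m → ℤ) := glue A B with hW
  have hOkW : Ok W := Ok_glue (Ok_move L _ hnegabs) (Ok_glue (Ok_snake L m) (Ok_move L _ hp0abs))
  have hAlen : A.length = L := length_move L _
  have hMvlen : Mv.length = L := length_move L _
  -- the start of the snake
  have hA0 : pos A p0 A.length = 0 := by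
    rw [hAlen, hA, pos_move_end L _ hnegabs]
    funext j
    simp
  -- final position
  have hWend : pos W p0 W.length = p0 := by
    rw [hW, pos_glue_end, hA0, hB, pos_glue_end, hS, snake_end, hMvlen, hMv,
      pos_move_end L _ hp0abs, zero_add]
  refine ⟨W.length + 2, fun t => (pos W p0 t, F W t), ⟨?_, by omega, ?_, ?_⟩, ?_⟩
  · -- trajectory
    intro t h
    exact ⟨rfl, fun j => hOkW t j⟩
  · -- endpoints
    intro h
    refine ⟨rfl, rfl, ?_, ?_⟩
    · show pos W p0 (W.length + 2 - 1) = p0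
      rw [show W.length + 2 - 1 = W.length + 1 from rfl, pos_len_succ, hWend]
    · show F W (W.length + 2 - 1) = 0
      rw [show W.length + 2 - 1 = W.length + 1 from rfl, F_len_succ]
  · -- visits
    intro q hq
    obtain ⟨t, ht, hqt⟩ := snake_visit L m 0 q
      (fun i _ => by simpa using hbox q hq i)
      (fun i hi => absurd i.isLt (by omega))
    have ht' : t ≤ S.length := by rw [hS]; exact ht
    refine ⟨⟨A.length + 1 + t, ?_⟩, ?_⟩
    · have : B.length = S.length + Mv.length + 1 := length_glue _ _
      have : W.length = A.length + B.length + 1 := length_glue _ _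
      omega
    · show pos W p0 (A.length + 1 + t) = q
      rw [hW, pos_glue_right, hA0, hB, pos_glue_left _ _ _ (by omega), hS, hqt]
  · -- length bound
    have h1 : S.length ≤ 4 * m * (L + 1) ^ m := snake_length_le L m
    have h2 : W.length = S.length + 2 * L + 2 := by
      rw [hW, length_glue, hB, length_glue, hAlen, hMvlen]
      ring
    have h3 : L + 1 ≤ (L + 1) ^ m := Nat.le_self_pow (by omega) _
    calc W.length + 2 = S.length + 2 * (L + 1) + 2 := by omega
      _ ≤ 4 * m * (L + 1) ^ m + 4 * (L + 1) ^ m := by omega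
      _ = (4 * m + 4) * (L + 1) ^ m := by ring

end VTSPAux

open VTSPAux in
/-- An optimal (minimum-length) solution trajectory lives in a portion of the
configuration space of cardinality polynomial in `L`, namely
`O((L+1)^(3m²))`. -/
theorem vtsp_bounded_configuration_graph (m : ℕ) (hm : 1 ≤ m) :
    ∃ C : ℕ, ∀ (L : ℕ) (P : Finset (Fin m → ℤ)), P.Nonempty →
      (∀ q ∈ P, ∀ j : Fin m, 0 ≤ q j ∧ q j ≤ (L : ℤ)) →
      ∀ p0 ∈ P, ∃ S : Finset ((Fin m → ℤ) × (Fin m → ℤ)),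
        S.card ≤ C * (L + 1) ^ (3 * m ^ 2) ∧
        ∀ (k : ℕ) (c : Fin k → (Fin m → ℤ) × (Fin m → ℤ)),
          IsSolution m P p0 k c →
          (∀ (k' : ℕ) (c' : Fin k' → (Fin m → ℤ) × (Fin m → ℤ)),
            IsSolution m P p0 k' c' → k ≤ k') →
          ∀ t : Fin k, c t ∈ S := by
  refine ⟨9 ^ m * (4 * m + 4) ^ (3 * m), ?_⟩
  intro L P hPne hbox p0 hp0
  set b : ℕ := (4 * m + 4) * (L + 1) ^ m with hb
  have hLb : L + 1 ≤ b := by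
    have h3 : L + 1 ≤ (L + 1) ^ m := Nat.le_self_pow (by omega) _
    calc L + 1 ≤ (L + 1) ^ m := h3
      _ ≤ (4 * m + 4) * (L + 1) ^ m := Nat.le_mul_of_pos_left _ (by omega)
  have hbpos : 1 ≤ b := by omega
  refine ⟨(Fintype.piFinset fun _ : Fin m => Finset.Icc (-((b : ℤ) * b)) ((L : ℤ) + b * b)) ×ˢ
    (Fintype.piFinset fun _ : Fin m => Finset.Icc (-(b : ℤ)) (b : ℤ)), ?_, ?_⟩
  · -- cardinality bound
    rw [Finset.card_product, Fintype.card_piFinset, Fintype.card_piFinset]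
    have c1 : (Finset.Icc (-((b : ℤ) * b)) ((L : ℤ) + b * b)).card = L + 2 * (b * b) + 1 := by
      rw [Int.card_Icc]
      have h : ((L : ℤ) + b * b + 1 - -((b : ℤ) * b)) = ((L + 2 * (b * b) + 1 : ℕ) : ℤ) := by
        push_cast; ring
      rw [h, Int.toNat_natCast]
    have c2 : (Finset.Icc (-(b : ℤ)) (b : ℤ)).card = 2 * b + 1 := by
      rw [Int.card_Icc]
      have h : ((b : ℤ) + 1 - -(b : ℤ)) = ((2 * b + 1 : ℕ) : ℤ) := by push_cast; ring
      rw [h, Int.toNat_natCast]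
    simp only [c1, c2, Finset.prod_const, Finset.card_univ, Fintype.card_fin]
    have e1 : L + 2 * (b * b) + 1 ≤ 3 * (b * b) := by nlinarith
    have e2 : 2 * b + 1 ≤ 3 * b := by omega
    calc (L + 2 * (b * b) + 1) ^ m * (2 * b + 1) ^ m
        ≤ (3 * (b * b)) ^ m * (3 * b) ^ m :=
          Nat.mul_le_mul (Nat.pow_le_pow_left e1 m) (Nat.pow_le_pow_left e2 m)
      _ = (9 * b ^ 3) ^ m := by rw [← mul_pow]; ring_nf
      _ = 9 ^ m * b ^ (3 * m) := by rw [mul_pow, ← pow_mul, mul_comm 3 m]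
      _ = 9 ^ m * ((4 * m + 4) ^ (3 * m) * ((L + 1) ^ m) ^ (3 * m)) := by
          rw [hb, mul_pow]
      _ = 9 ^ m * (4 * m + 4) ^ (3 * m) * (L + 1) ^ (3 * m ^ 2) := by
          rw [← pow_mul, show m * (3 * m) = 3 * m ^ 2 from by ring, mul_assoc]
  · -- membership of optimal trajectories
    intro k c hsol hopt t
    obtain ⟨kW, cW, hsolW, hkW⟩ := exists_short_solution m hm L P hbox p0 hp0
    have hk : k ≤ b := le_trans (hopt kW cW hsolW) hkW
    have main : ∀ (s : ℕ) (hs : s < k),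
        (∀ j, |(c ⟨s, hs⟩).2 j| ≤ (s : ℤ)) ∧
        (∀ j, |(c ⟨s, hs⟩).1 j - p0 j| ≤ (s : ℤ) * s) := by
      intro s
      induction s with
      | zero =>
        intro hs
        obtain ⟨h01, h02, -, -⟩ := hsol.2.2.1 hs
        constructor
        · intro j; rw [h02]; simp
        · intro j; rw [h01]; simp
      | succ s ih =>
        intro hs
        have hs' : s < k := by omega
        obtain ⟨e1, e2⟩ := hsol.1 s hs
        obtain ⟨iv, ip⟩ := ih hs'
        have h4 : (c ⟨s + 1, hs⟩).1 = (c ⟨s, hs'⟩).1 + (c ⟨s + 1, hs⟩).2 := e1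
        have h5 : ∀ j, |(c ⟨s + 1, hs⟩).2 j - (c ⟨s, hs'⟩).2 j| ≤ 1 := e2
        have hvs : ∀ j, |(c ⟨s + 1, hs⟩).2 j| ≤ ((s : ℤ) + 1) := by
          intro j
          have h1 := h5 j
          have h2 := iv j
          rw [abs_le] at h1 h2 ⊢
          constructor <;> linarith [h1.1, h1.2, h2.1, h2.2]
        constructor
        · intro j
          have := hvs j
          push_cast
          linarith
        · intro j
          have h1 := hvs j
          have h3 := ip j
          have h4j : (c ⟨s + 1, hs⟩).1 j = (c ⟨s, hs'⟩).1 j + (c ⟨s + 1, hs⟩).2 j := by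
            rw [h4]; simp
          have hs0 : (0 : ℤ) ≤ (s : ℤ) := Int.natCast_nonneg s
          rw [abs_le] at h1 h3 ⊢
          push_cast
          constructor <;> nlinarith [h1.1, h1.2, h3.1, h3.2]
    have hv : ∀ j, |(c t).2 j| ≤ ((t : ℕ) : ℤ) := (main t.1 t.2).1
    have hp : ∀ j, |(c t).1 j - p0 j| ≤ ((t : ℕ) : ℤ) * (t : ℕ) := (main t.1 t.2).2
    have htk := t.2
    have htb : (t : ℕ) ≤ b := by omega
    have htbz : ((t : ℕ) : ℤ) ≤ (b : ℤ) := by exact_mod_cast htb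
    have ht0 : (0 : ℤ) ≤ ((t : ℕ) : ℤ) := Int.natCast_nonneg _
    rw [Finset.mem_product]
    constructor
    · rw [Fintype.mem_piFinset]
      intro j
      rw [Finset.mem_Icc]
      have h1 := abs_le.mp (hp j)
      have h2 := hbox p0 hp0 j
      have h3 : ((t : ℕ) : ℤ) * (t : ℕ) ≤ (b : ℤ) * b := by nlinarith
      constructor <;> linarith [h1.1, h1.2, h2.1, h2.2]
    · rw [Fintype.mem_piFinset]
      intro j
      rw [Finset.mem_Icc]
      have h1 := abs_le.mp (hv j)
      constructor <;> linarith [h1.1, h1.2]
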